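/- Let G be a complex m×n matrix with ‖G v‖ ≥ γ₀ ‖v‖ for all v (γ₀ > 0), set A = Gᴴ G, K = A⁻¹ Gᴴ, P = G A⁻¹ Gᴴ, let b ∈ ℂⁿ, and let w(t) = exp(t M)(b, 0) with blocks (r(t), s(t)). Then the real-valued function C(t) = Re⟨r(t), K s(t)⟩ is differentiable at every t with derivative C′(t) = −‖P s(t)‖² + ‖r(t)‖² − C(t). -/

import Mathlib

open scoped Matrix ComplexInnerProductSpace
open Filter MeasureTheory

noncomputable section

/-- `ℂ^k` with the ℓ² norm. -/
abbrev Evec (k : ℕ) : Type := EuclideanSpace ℂ (Fin k)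

/-- The joint space `ℂⁿ ⊕ ℂᵐ` with the ℓ² norm. -/
abbrev Jvec (n m : ℕ) : Type := EuclideanSpace ℂ (Fin n ⊕ Fin m)

/-- A complex matrix viewed as a continuous linear map between Euclidean spaces,
so that `‖matCLM A‖` is the induced ℓ² operator norm. -/
noncomputable def matCLM {α β : Type*} [Fintype α] [Fintype β] [DecidableEq β]
    (A : Matrix α β ℂ) : EuclideanSpace ℂ β →L[ℂ] EuclideanSpace ℂ α :=
  LinearMap.toContinuousLinearMap (Matrix.toEuclideanLin A)

/-- The block matrix `M = [[0, -Gᴴ], [G, -I]]` on `ℂⁿ ⊕ ℂᵐ`. -/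
def blockM {m n : ℕ} (G : Matrix (Fin m) (Fin n) ℂ) :
    Matrix (Fin n ⊕ Fin m) (Fin n ⊕ Fin m) ℂ :=
  Matrix.fromBlocks 0 (-Gᴴ) G (-1)

/-- The matrix exponential `exp (t M)` as a continuous linear map on `ℂⁿ ⊕ ℂᵐ`. -/
noncomputable def expM {m n : ℕ} (G : Matrix (Fin m) (Fin n) ℂ) (t : ℝ) :
    Jvec n m →L[ℂ] Jvec n m :=
  NormedSpace.exp (t • matCLM (blockM G))

/-- Join two blocks into a joint vector. -/
def joinV {n m : ℕ} (r : Evec n) (s : Evec m) : Jvec n m :=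
  (WithLp.equiv 2 _).symm (Sum.elim ((WithLp.equiv 2 _) r) ((WithLp.equiv 2 _) s))

/-- First (residual `r`) block of a joint vector. -/
def rblock {n m : ℕ} (w : Jvec n m) : Evec n :=
  (WithLp.equiv 2 _).symm fun i => w (Sum.inl i)

/-- Second (residual `s`) block of a joint vector. -/
def sblock {n m : ℕ} (w : Jvec n m) : Evec m :=
  (WithLp.equiv 2 _).symm fun j => w (Sum.inr j)

/-- Residual dynamics `w(t) = exp (t M) (b, 0)`. -/
noncomputable def wdyn {m n : ℕ} (G : Matrix (Fin m) (Fin n) ℂ) (b : Evec n) (t : ℝ) :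
    Jvec n m :=
  expM G t (joinV b 0)

/-- Accumulator `x(t) = ∫₀ᵗ r(τ) dτ`. -/
noncomputable def xacc {m n : ℕ} (G : Matrix (Fin m) (Fin n) ℂ) (b : Evec n) (t : ℝ) :
    Evec n :=
  ∫ τ in (0:ℝ)..t, rblock (wdyn G b τ)

section Aux

set_option linter.unusedSectionVars false

variable {α β γ : Type*} [Fintype α] [Fintype β] [Fintype γ]
  [DecidableEq α] [DecidableEq β] [DecidableEq γ]

lemma matCLM_mul (A : Matrix α β ℂ) (B : Matrix β γ ℂ) (v : EuclideanSpace ℂ γ) :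
    matCLM (A * B) v = matCLM A (matCLM B v) := by
  simp [matCLM, Matrix.toEuclideanLin_apply, Matrix.mulVec_mulVec]

lemma matCLM_one (v : EuclideanSpace ℂ α) : matCLM (1 : Matrix α α ℂ) v = v := by
  simp [matCLM, Matrix.toEuclideanLin_apply]

lemma inner_matCLM_left (A : Matrix α β ℂ) (x : EuclideanSpace ℂ β) (y : EuclideanSpace ℂ α) :
    ⟪matCLM A x, y⟫ = ⟪x, matCLM Aᴴ y⟫ := by
  have h := Matrix.toEuclideanLin_conjTranspose_eq_adjoint A
  simp only [matCLM, LinearMap.coe_toContinuousLinearMap', h]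
  exact (LinearMap.adjoint_inner_right _ _ _).symm

lemma rblock_matCLM_blockM {m n : ℕ} (G : Matrix (Fin m) (Fin n) ℂ) (w : Jvec n m) :
    rblock (matCLM (blockM G) w) = -(matCLM Gᴴ (sblock w)) := by
  ext i
  show ((blockM G) *ᵥ (fun k => w k)) (Sum.inl i) = -((Gᴴ *ᵥ fun j => w (Sum.inr j)) i)
  simp [blockM, Matrix.mulVec, dotProduct, Fintype.sum_sum_type, Matrix.fromBlocks,
    neg_mul, Finset.sum_neg_distrib]

lemma sblock_matCLM_blockM {m n : ℕ} (G : Matrix (Fin m) (Fin n) ℂ) (w : Jvec n m) :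
    sblock (matCLM (blockM G) w) = matCLM G (rblock w) - sblock w := by
  ext j
  show ((blockM G) *ᵥ (fun k => w k)) (Sum.inr j) = (G *ᵥ fun i => w (Sum.inl i)) j - w (Sum.inr j)
  simp [blockM, Matrix.mulVec, dotProduct, Fintype.sum_sum_type, Matrix.fromBlocks,
    Matrix.one_apply, apply_ite, Finset.sum_ite_eq, sub_eq_add_neg, neg_mul,
    Finset.sum_neg_distrib]

/-- The first-block projection as a continuous linear map. -/
def rCLM (n m : ℕ) : Jvec n m →L[ℂ] Evec n :=
  LinearMap.toContinuousLinearMap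
    { toFun := rblock
      map_add' := fun _ _ => rfl
      map_smul' := fun _ _ => rfl }

/-- The second-block projection as a continuous linear map. -/
def sCLM (n m : ℕ) : Jvec n m →L[ℂ] Evec m :=
  LinearMap.toContinuousLinearMap
    { toFun := sblock
      map_add' := fun _ _ => rfl
      map_smul' := fun _ _ => rfl }

lemma rCLM_apply {n m : ℕ} (w : Jvec n m) : rCLM n m w = rblock w := rfl

lemma sCLM_apply {n m : ℕ} (w : Jvec n m) : sCLM n m w = sblock w := rfl

set_option maxHeartbeats 1000000 in
/-- Derivative of the residual dynamics. -/
lemma hasDerivAt_wdyn {m n : ℕ} (G : Matrix (Fin m) (Fin n) ℂ) (b : Evec n) (t : ℝ) :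
    HasDerivAt (wdyn G b) (matCLM (blockM G) (wdyn G b t)) t := by
  set L : Jvec n m →L[ℂ] Jvec n m := matCLM (blockM G) with hL
  have hexp : (NormedSpace.exp : (Jvec n m →L[ℂ] Jvec n m) → _) = NormedSpace.exp :=
    rfl
  have h1 : HasDerivAt (fun u : ℝ => NormedSpace.exp (u • L))
      (L * NormedSpace.exp (t • L)) t := hasDerivAt_exp_smul_const' L t
  have ev : (Jvec n m →L[ℂ] Jvec n m) →L[ℝ] Jvec n m :=
    ((ContinuousLinearMap.apply ℂ (Jvec n m)) (joinV b 0)).restrictScalars ℝ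
  have h2 := (((ContinuousLinearMap.apply ℂ (Jvec n m)) (joinV b 0)).restrictScalars
    ℝ).hasFDerivAt.comp_hasDerivAt t h1
  have hfun : (fun u : ℝ => ((ContinuousLinearMap.apply ℂ (Jvec n m)) (joinV b 0)).restrictScalars ℝ
      (NormedSpace.exp (u • L))) = wdyn G b := by
    funext u
    simp only [ContinuousLinearMap.coe_restrictScalars', ContinuousLinearMap.apply_apply]
    rw [wdyn, expM, hexp]
  rw [Function.comp_def, hfun] at h2
  refine h2.congr_deriv ?_
  simp only [ContinuousLinearMap.coe_restrictScalars', ContinuousLinearMap.apply_apply,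
    ContinuousLinearMap.mul_apply]
  rw [wdyn, expM, hexp]

end Aux

theorem stmt7_cross_term_derivative {m n : ℕ} (hm : 0 < m) (hn : 0 < n)
    (γ₀ : ℝ) (hγ : 0 < γ₀) (G : Matrix (Fin m) (Fin n) ℂ)
    (hG : ∀ v : Evec n, γ₀ * ‖v‖ ≤ ‖matCLM G v‖) (b : Evec n) :
    ∀ t : ℝ,
      HasDerivAt
        (fun τ : ℝ => (⟪rblock (wdyn G b τ), matCLM ((Gᴴ * G)⁻¹ * Gᴴ) (sblock (wdyn G b τ))⟫).re)
        (-‖matCLM (G * (Gᴴ * G)⁻¹ * Gᴴ) (sblock (wdyn G b t))‖ ^ 2 + ‖rblock (wdyn G b t)‖ ^ 2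
          - (⟪rblock (wdyn G b t), matCLM ((Gᴴ * G)⁻¹ * Gᴴ) (sblock (wdyn G b t))⟫).re) t := by
  -- invertibility of `A = Gᴴ G`
  have hdet : IsUnit (Gᴴ * G).det := by
    rw [← Matrix.isUnit_iff_isUnit_det, ← Matrix.mulVec_injective_iff_isUnit]
    have hker : ∀ v : Fin n → ℂ, (Gᴴ * G) *ᵥ v = 0 → v = 0 := ?_
    · intro u v huv
      have : (Gᴴ * G) *ᵥ (u - v) = 0 := by
        rw [Matrix.mulVec_sub, huv, sub_self]
      exact sub_eq_zero.mp (hker _ this)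
    intro v hv
    set v' : Evec n := (WithLp.equiv 2 _).symm v with hv'
    have hm0 : matCLM (Gᴴ * G) v' = 0 := by
      simp only [matCLM, LinearMap.coe_toContinuousLinearMap', hv',
        WithLp.equiv_symm_apply, Matrix.toEuclideanLin_apply_piLp_toLp, hv]
      rfl
    have hinner : (⟪matCLM G v', matCLM G v'⟫ : ℂ) = 0 := by
      rw [inner_matCLM_left, ← matCLM_mul, hm0, inner_zero_right]
    have hGv : matCLM G v' = 0 := by rwa [inner_self_eq_zero] at hinner
    have h0 : γ₀ * ‖v'‖ ≤ 0 := by simpa [hGv] using hG v'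
    have hn0 : ‖v'‖ = 0 := by nlinarith [norm_nonneg v']
    have hv0 : v' = 0 := norm_eq_zero.mp hn0
    exact (WithLp.equiv 2 _).symm.injective (by exact hv0)
  have hKG : ((Gᴴ * G)⁻¹ * Gᴴ) * G = 1 := by
    rw [Matrix.mul_assoc, Matrix.nonsing_inv_mul _ hdet]
  have hAH : (Gᴴ * G)ᴴ = Gᴴ * G := by
    rw [Matrix.conjTranspose_mul, Matrix.conjTranspose_conjTranspose]
  have hPH : (G * (Gᴴ * G)⁻¹ * Gᴴ)ᴴ = G * (Gᴴ * G)⁻¹ * Gᴴ := by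
    simp only [Matrix.conjTranspose_mul, Matrix.conjTranspose_conjTranspose,
      Matrix.conjTranspose_nonsing_inv, hAH, Matrix.mul_assoc]
  have hPP : (G * (Gᴴ * G)⁻¹ * Gᴴ) * (G * (Gᴴ * G)⁻¹ * Gᴴ) = G * (Gᴴ * G)⁻¹ * Gᴴ := by
    calc (G * (Gᴴ * G)⁻¹ * Gᴴ) * (G * (Gᴴ * G)⁻¹ * Gᴴ)
        = G * (Gᴴ * G)⁻¹ * (((Gᴴ * G)) * ((Gᴴ * G)⁻¹ * Gᴴ)) := by
          simp only [Matrix.mul_assoc]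
      _ = G * (Gᴴ * G)⁻¹ * Gᴴ := by
          rw [Matrix.mul_nonsing_inv_cancel_left _ _ hdet]
  intro t
  set L : Jvec n m →L[ℂ] Jvec n m := matCLM (blockM G) with hL
  set w : Jvec n m := wdyn G b t with hwdef
  have hw : HasDerivAt (wdyn G b) (L w) t := hasDerivAt_wdyn G b t
  -- derivatives of the blocks
  have hr : HasDerivAt (fun τ => rblock (wdyn G b τ)) (rblock (L w)) t :=
    ((rCLM n m).restrictScalars ℝ).hasFDerivAt.comp_hasDerivAt t hw
  have hKs : HasDerivAt (fun τ => matCLM ((Gᴴ * G)⁻¹ * Gᴴ) (sblock (wdyn G b τ)))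
      (matCLM ((Gᴴ * G)⁻¹ * Gᴴ) (sblock (L w))) t :=
    (((matCLM ((Gᴴ * G)⁻¹ * Gᴴ)).comp (sCLM n m)).restrictScalars
      ℝ).hasFDerivAt.comp_hasDerivAt t hw
  have hinner := hr.inner ℂ hKs
  have hre := Complex.reCLM.hasFDerivAt.comp_hasDerivAt t hinner
  refine hre.congr_deriv ?_
  -- now the algebraic identity for the derivative value
  have hrb : rblock (L w) = -(matCLM Gᴴ (sblock w)) := rblock_matCLM_blockM G w
  have hsb : sblock (L w) = matCLM G (rblock w) - sblock w := sblock_matCLM_blockM G w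
  have e1 : (⟪rblock w, matCLM ((Gᴴ * G)⁻¹ * Gᴴ) (sblock (L w))⟫ : ℂ)
      = ⟪rblock w, rblock w⟫ - ⟪rblock w, matCLM ((Gᴴ * G)⁻¹ * Gᴴ) (sblock w)⟫ := by
    rw [hsb, map_sub, inner_sub_right, ← matCLM_mul, hKG, matCLM_one]
  have e2 : (⟪rblock (L w), matCLM ((Gᴴ * G)⁻¹ * Gᴴ) (sblock w)⟫ : ℂ)
      = -⟪matCLM (G * (Gᴴ * G)⁻¹ * Gᴴ) (sblock w), matCLM (G * (Gᴴ * G)⁻¹ * Gᴴ) (sblock w)⟫ := by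
    rw [hrb, inner_neg_left, neg_inj, inner_matCLM_left, Matrix.conjTranspose_conjTranspose,
      ← matCLM_mul, inner_matCLM_left, hPH, ← matCLM_mul, hPP]
    rw [← Matrix.mul_assoc]
  simp only [← hwdef, Complex.reCLM_apply, e1, e2, ← RCLike.re_to_complex, map_add, map_sub, map_neg,
    inner_self_eq_norm_sq (𝕜 := ℂ)]
  ring
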